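/- Let n = d·e be a squarefree positive integer and let t be an integer whose residue class modulo e has multiplicative order d in (ℤ/eℤ)ˣ. In the group G(d,e,t), the conjugacy class of the element (b, a) (corresponding to x^a y^b) has exactly k · e / gcd(e, t^a − 1) elements, where k is the smallest positive integer such that b·(t^k − 1) ≡ 0 modulo gcd(e, t^a − 1). -/

import Mathlib

/-- The units of `ZMod e` act on `Multiplicative (ZMod e)` as (multiplicative) automorphisms. -/
def unitsMulAut (e : ℕ) : (ZMod e)ˣ →* MulAut (Multiplicative (ZMod e)) where
  toFun u := AddEquiv.toMultiplicative (DistribMulAction.toAddAut (ZMod e)ˣ (ZMod e) u)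
  map_one' := by
    ext x
    show Multiplicative.ofAdd ((1 : (ZMod e)ˣ) • x.toAdd) = x
    simp
  map_mul' u v := by
    ext x
    show Multiplicative.ofAdd (((u * v) : (ZMod e)ˣ) • x.toAdd)
      = Multiplicative.ofAdd (u • v • x.toAdd)
    rw [mul_smul]

/-- The homomorphism `Multiplicative (ZMod d) →* (ZMod e)ˣ` sending `a` to `u ^ a`,
well defined since `u ^ d = 1`. -/
def zmodPowHom {e : ℕ} (d : ℕ) (u : (ZMod e)ˣ) (hu : u ^ d = 1) :
    Multiplicative (ZMod d) →* (ZMod e)ˣ :=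
  AddMonoidHom.toMultiplicativeLeft
    (ZMod.lift d ⟨zmultiplesHom (Additive (ZMod e)ˣ) (Additive.ofMul u), by
      simpa [zmultiplesHom, ← ofMul_pow] using congrArg Additive.ofMul hu⟩)

/-- The group `G(d,e,t)` where `u` is the unit of `ZMod e` given by `t` :
the semidirect product `(ℤ/eℤ) ⋊ (ℤ/dℤ)` in which `a ∈ ℤ/dℤ` acts on `ℤ/eℤ` by
`b ↦ t ^ a * b`.  This is the group with presentation
`⟨x, y | x ^ d = 1, y ^ e = 1, x⁻¹ * y * x = y ^ t⟩`, the element `(b, a)`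
corresponding to `x ^ a * y ^ b`. -/
abbrev Gdet (d e : ℕ) (u : (ZMod e)ˣ) (hu : u ^ d = 1) : Type :=
  SemidirectProduct (Multiplicative (ZMod e)) (Multiplicative (ZMod d))
    ((unitsMulAut e).comp (zmodPowHom d u hu))

lemma zmodPowHom_natCast {e : ℕ} (d : ℕ) (u : (ZMod e)ˣ) (hu1 : u ^ d = 1) (m : ℕ) :
    zmodPowHom d u hu1 (Multiplicative.ofAdd ((m : ZMod d))) = u ^ m := by
  have h1 : ((m : ZMod d)) = ((m : ℤ) : ZMod d) := by push_cast; rfl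
  unfold zmodPowHom
  rw [AddMonoidHom.toMultiplicativeLeft_apply_apply, toAdd_ofAdd, h1, ZMod.lift_coe]
  show Additive.toMul ((m:ℤ) • Additive.ofMul u) = u ^ m
  simp [← ofMul_zpow]

lemma phi_eval {e : ℕ} (d : ℕ) (u : (ZMod e)ˣ) (hu1 : u ^ d = 1) (m : ℕ)
    (y : Multiplicative (ZMod e)) :
    ((unitsMulAut e).comp (zmodPowHom d u hu1)) (Multiplicative.ofAdd ((m : ZMod d))) y
      = Multiplicative.ofAdd (((u : ZMod e)) ^ m * y.toAdd) := by
  rw [MonoidHom.comp_apply, zmodPowHom_natCast]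
  show Multiplicative.ofAdd ((u ^ m : (ZMod e)ˣ) • y.toAdd) = _
  rw [Units.smul_def, Units.val_pow_eq_pow_val, smul_eq_mul]

lemma key_dvd_cancel {g : ℕ} {t w : ℤ} (hw : (g:ℤ) ∣ t * w - 1) (m : ℕ) (X : ℤ)
    (h : (g:ℤ) ∣ t ^ m * X) : (g:ℤ) ∣ X := by
  have h1 : (g:ℤ) ∣ t ^ m * X * w ^ m := h.mul_right _
  have h2 : (g:ℤ) ∣ X * ((t*w) ^ m - 1) := by
    refine Dvd.dvd.mul_left (hw.trans ?_) X
    simpa using sub_dvd_pow_sub_pow (t*w) 1 m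
  have hX : X = t ^ m * X * w ^ m - X * ((t*w) ^ m - 1) := by ring
  rw [hX]; exact dvd_sub h1 h2

lemma key_mult {g : ℕ} {t b : ℤ} {k : ℕ} (hkd : (g:ℤ) ∣ b * (t ^ k - 1)) (q : ℕ) :
    (g:ℤ) ∣ b * (t ^ (k * q) - 1) := by
  have h1 : (t ^ k - 1 : ℤ) ∣ t ^ (k * q) - 1 := by
    simpa [pow_mul] using sub_dvd_pow_sub_pow (t ^ k) 1 q
  obtain ⟨c, hc⟩ := h1
  obtain ⟨c', hc'⟩ := hkd
  exact ⟨c' * c, by rw [hc, ← mul_assoc, hc', mul_assoc]⟩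

lemma key_iff {g : ℕ} {t w b : ℤ} (hw : (g:ℤ) ∣ t * w - 1) {k : ℕ}
    (hk : IsLeast {k : ℕ | 0 < k ∧ (g:ℤ) ∣ b * (t ^ k - 1)} k) (m : ℕ) :
    (g:ℤ) ∣ b * (t ^ m - 1) ↔ k ∣ m := by
  have hk0 := hk.1.1
  constructor
  · intro hm
    have hq : (g:ℤ) ∣ b * (t ^ (k * (m / k)) - 1) := key_mult hk.1.2 _
    have hr : (g:ℤ) ∣ b * (t ^ (m % k) - 1) := by
      refine key_dvd_cancel hw (k * (m / k)) _ ?_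
      have hm' := Nat.div_add_mod m k
      set q := m / k with hqdef
      set r := m % k with hrdef
      have heq : t ^ (k * q) * (b * (t ^ r - 1))
          = b * (t ^ m - 1) - b * (t ^ (k * q) - 1) := by
        rw [← hm', pow_add]; ring
      rw [heq]; exact dvd_sub hm hq
    rcases Nat.eq_zero_or_pos (m % k) with h0 | hpos
    · exact Nat.dvd_of_mod_eq_zero h0
    · exact absurd (hk.2 ⟨hpos, hr⟩) (Nat.not_le.2 (Nat.mod_lt m hk0))
  · rintro ⟨q, rfl⟩
    exact key_mult hk.1.2 q


/-- **Conjugacy class sizes in groups of squarefree order.**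
Let `n = d * e` be a squarefree positive integer and `t` an integer whose residue class
mod `e` has multiplicative order `d` in `(ℤ/eℤ)ˣ`.  In `G(d,e,t)`, the conjugacy class of
the element `(b, a)` (corresponding to `x^a y^b`) has exactly `k * e / gcd (e, t^a - 1)`
elements, where `k` is the smallest positive integer with
`b * (t^k - 1) ≡ 0 mod gcd (e, t^a - 1)`. -/
theorem classSize_of_squarefree (d e : ℕ) (hd : 0 < d) (he : 0 < e)
    (hn : Squarefree (d * e)) (t : ℤ) (u : (ZMod e)ˣ)
    (hu : (u : ZMod e) = (t : ZMod e)) (hord : orderOf u = d)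
    (a : ℕ) (b : ℤ) (k : ℕ)
    (hk : IsLeast {k : ℕ | 0 < k ∧ (Int.gcd e (t ^ a - 1) : ℤ) ∣ b * (t ^ k - 1)} k) :
    Nat.card (conjugatesOf
        (⟨Multiplicative.ofAdd (b : ZMod e), Multiplicative.ofAdd (a : ZMod d)⟩ :
          Gdet d e u (by rw [← hord]; exact pow_orderOf_eq_one u)))
      = k * e / Int.gcd e (t ^ a - 1) := by
  have hu1 : u ^ d = 1 := by rw [← hord]; exact pow_orderOf_eq_one u
  show Nat.card (conjugatesOf
        (⟨Multiplicative.ofAdd (b : ZMod e), Multiplicative.ofAdd (a : ZMod d)⟩ :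
          Gdet d e u hu1))
      = k * e / Int.gcd e (t ^ a - 1)
  haveI : NeZero d := ⟨hd.ne'⟩
  haveI : NeZero e := ⟨he.ne'⟩
  haveI : NeZero k := ⟨hk.1.1.ne'⟩
  set g := Int.gcd (e : ℤ) (t ^ a - 1) with hgdef
  have hge : (g : ℤ) ∣ (e : ℤ) := Int.gcd_dvd_left _ _
  have hgt : (g : ℤ) ∣ t ^ a - 1 := Int.gcd_dvd_right _ _
  have hgdvd : g ∣ e := Int.ofNat_dvd.mp (by exact_mod_cast hge)
  have hgpos : 0 < g := Nat.pos_of_dvd_of_pos hgdvd he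
  haveI : NeZero g := ⟨hgpos.ne'⟩
  -- inverse of t mod e
  have hw : (g : ℤ) ∣ t * (((u⁻¹ : (ZMod e)ˣ) : ZMod e).val : ℤ) - 1 := by
    refine hge.trans ((ZMod.intCast_zmod_eq_zero_iff_dvd _ e).mp ?_)
    push_cast
    rw [ZMod.natCast_val, ZMod.cast_id, ← hu, Units.mul_inv, sub_self]
  have hL : ∀ m : ℕ, ((g : ℤ) ∣ b * (t ^ m - 1)) ↔ k ∣ m := key_iff hw hk
  set ψ : ZMod e →+* ZMod g := ZMod.castHom hgdvd (ZMod g) with hψdef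
  have hψint : ∀ z : ℤ, ψ ((z : ZMod e)) = (z : ZMod g) := fun z => map_intCast ψ z
  have hψv : ψ ((u : ZMod e)) = ((t : ℤ) : ZMod g) := by rw [hu]; exact_mod_cast hψint t
  set x : Gdet d e u hu1 :=
    ⟨Multiplicative.ofAdd (b : ZMod e), Multiplicative.ofAdd (a : ZMod d)⟩ with hxdef
  set T : Set (ZMod e) :=
    {y | ∃ s : ℕ, ∃ z : ZMod e, ψ z = 0 ∧ y = (u : ZMod e) ^ s * (b : ZMod e) + z} with hTdef
  have hva : (u : ZMod e) ^ ((a : ZMod d)).val = (u : ZMod e) ^ a := by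
    have h2 : u ^ ((a : ZMod d)).val = u ^ a := by
      rw [pow_eq_pow_iff_modEq, hord, ZMod.val_natCast]
      exact (Nat.mod_modEq a d)
    calc (u : ZMod e) ^ ((a : ZMod d)).val = ((u ^ ((a : ZMod d)).val : (ZMod e)ˣ) : ZMod e) := by
          rw [Units.val_pow_eq_pow_val]
      _ = ((u ^ a : (ZMod e)ˣ) : ZMod e) := by rw [h2]
      _ = (u : ZMod e) ^ a := Units.val_pow_eq_pow_val u a
  -- solving (1 - u^a) * c = z for z in ker ψ
  have hsolve : ∀ z : ZMod e, ψ z = 0 → ∃ c : ZMod e, (1 - (u : ZMod e) ^ a) * c = z := by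
    intro z hz
    have hzval : g ∣ z.val := by
      have h3 : ((z.val : ℕ) : ZMod g) = 0 := by
        rw [← hz, hψdef, ZMod.castHom_apply, ZMod.natCast_val]
      exact (ZMod.natCast_eq_zero_iff _ _).mp h3
    obtain ⟨m, hm⟩ := hzval
    have hbez := Int.gcd_eq_gcd_ab (e : ℤ) (t ^ a - 1)
    set B := Int.gcdB (e : ℤ) (t ^ a - 1) with hBdef
    have hB : ((g : ℕ) : ZMod e) = ((u : ZMod e) ^ a - 1) * ((B : ℤ) : ZMod e) := by
      calc ((g : ℕ) : ZMod e) = (((g : ℤ)) : ZMod e) := by push_cast; rfl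
        _ = (((e : ℤ) * Int.gcdA (e : ℤ) (t ^ a - 1) + (t ^ a - 1) * B : ℤ) : ZMod e) := by
            rw [← hbez]
        _ = ((u : ZMod e) ^ a - 1) * ((B : ℤ) : ZMod e) := by
            push_cast
            rw [ZMod.natCast_self, ← hu]
            ring
    refine ⟨-(((B : ℤ) : ZMod e) * (m : ZMod e)), ?_⟩
    have hz2 : z = ((z.val : ℕ) : ZMod e) := (ZMod.natCast_rightInverse z).symm
    rw [hz2, hm]
    push_cast
    rw [hB]
    ring
  -- conjugation characterization
  have hconj : conjugatesOf x =
      (fun y : ZMod e => (⟨Multiplicative.ofAdd y, Multiplicative.ofAdd (a : ZMod d)⟩ :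
        Gdet d e u hu1)) '' T := by
    ext p
    constructor
    · intro hp
      obtain ⟨c0, hc0⟩ := isConj_iff.mp hp
      have hsc : c0 * x = p * c0 := by rw [← hc0]; group
      set s : ℕ := (Multiplicative.toAdd c0.right).val with hsdef
      have hc0r : c0.right = Multiplicative.ofAdd ((s : ZMod d)) := by
        rw [hsdef, ZMod.natCast_rightInverse]
        rfl
      have hright := congrArg SemidirectProduct.right hsc
      simp only [SemidirectProduct.mul_right] at hright
      have hpr : p.right = Multiplicative.ofAdd ((a : ZMod d)) := by
        rw [mul_comm p.right c0.right] at hright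
        exact (mul_left_cancel hright).symm
      have hleft := congrArg SemidirectProduct.left hsc
      simp only [SemidirectProduct.mul_left] at hleft
      rw [hc0r, hpr, phi_eval d u hu1 s, phi_eval d u hu1 a] at hleft
      have hadd := congrArg Multiplicative.toAdd hleft
      simp only [toAdd_mul, toAdd_ofAdd] at hadd
      refine ⟨Multiplicative.toAdd p.left,
        ⟨s, (1 - (u : ZMod e) ^ a) * Multiplicative.toAdd c0.left, ?_, ?_⟩, ?_⟩
      · rw [map_mul, map_sub, map_one, map_pow, hψv]
        have h6 : (((t ^ a - 1 : ℤ)) : ZMod g) = 0 :=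
          (ZMod.intCast_zmod_eq_zero_iff_dvd _ _).mpr hgt
        push_cast at h6
        have h5 : (1 : ZMod g) - ((t : ℤ) : ZMod g) ^ a = 0 := by
          push_cast
          linear_combination -h6
        rw [h5, zero_mul]
      · have hxl : Multiplicative.toAdd x.left = (b : ZMod e) := rfl
        linear_combination -hadd + (u : ZMod e) ^ s * hxl
      · apply SemidirectProduct.ext
        · simp
        · exact hpr.symm
    · rintro ⟨y, ⟨s, z, hz, hy⟩, rfl⟩
      obtain ⟨c, hc⟩ := hsolve z hz
      show IsConj x _
      rw [isConj_iff]
      refine ⟨⟨Multiplicative.ofAdd c, Multiplicative.ofAdd ((s : ZMod d))⟩, ?_⟩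
      rw [mul_inv_eq_iff_eq_mul]
      apply SemidirectProduct.ext
      · simp only [SemidirectProduct.mul_left]
        rw [phi_eval d u hu1 s, phi_eval d u hu1 a]
        simp only [toAdd_ofAdd, ← ofAdd_add]
        congr 1
        have hxl : Multiplicative.toAdd x.left = (b : ZMod e) := rfl
        linear_combination hc - hy + (u : ZMod e) ^ s * hxl
      · simp only [SemidirectProduct.mul_right]
        exact mul_comm _ _
  rw [hconj]
  have hinj : Function.Injective (fun y : ZMod e =>
      (⟨Multiplicative.ofAdd y, Multiplicative.ofAdd (a : ZMod d)⟩ : Gdet d e u hu1)) := by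
    intro y1 y2 hy
    simpa using congrArg (fun p : Gdet d e u hu1 => Multiplicative.toAdd p.left) hy
  rw [Nat.card_coe_set_eq, Set.ncard_image_of_injective _ hinj, ← Nat.card_coe_set_eq]
  -- kernel subgroup
  set κ : AddSubgroup (ZMod e) := AddMonoidHom.ker ψ.toAddMonoidHom with hκdef
  have hκmem : ∀ z : ZMod e, z ∈ κ ↔ ψ z = 0 := fun z => Iff.rfl
  have hq1 : Nat.card (ZMod e) = Nat.card (ZMod e ⧸ κ) * Nat.card κ :=
    AddSubgroup.card_eq_card_quotient_mul_card_addSubgroup κ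
  have hsurj : Function.Surjective ψ.toAddMonoidHom := ZMod.ringHom_surjective ψ
  have hq2 : Nat.card (ZMod e ⧸ κ) = g := by
    rw [Nat.card_congr
      (QuotientAddGroup.quotientKerEquivOfSurjective ψ.toAddMonoidHom hsurj).toEquiv]
    exact Nat.card_zmod g
  rw [Nat.card_zmod, hq2] at hq1
  -- ψ on u^m * b
  have hψub : ∀ m : ℕ, ψ ((u : ZMod e) ^ m * (b : ZMod e)) = ((t ^ m * b : ℤ) : ZMod g) := by
    intro m
    rw [map_mul, map_pow, hψv, map_intCast]
    push_cast
    ring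
  -- the bijection
  set F : ZMod k × κ → T := fun p =>
    ⟨(u : ZMod e) ^ (p.1.val) * (b : ZMod e) + (p.2 : ZMod e),
      ⟨p.1.val, p.2, (hκmem _).mp p.2.2, rfl⟩⟩ with hFdef
  have haux : ∀ m m' : ℕ, m' ≤ m → m < k → ((g : ℤ) ∣ t ^ m * b - t ^ m' * b) → m = m' := by
    intro m m' hle hlt hdvd
    obtain ⟨c, rfl⟩ := Nat.exists_eq_add_of_le hle
    have h7 : (g : ℤ) ∣ t ^ m' * (b * (t ^ c - 1)) := by
      have heq : t ^ m' * (b * (t ^ c - 1)) = t ^ (m' + c) * b - t ^ m' * b := by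
        rw [pow_add]; ring
      rw [heq]; exact hdvd
    have h9 : k ∣ c := (hL _).mp (key_dvd_cancel hw m' _ h7)
    have h10 : c = 0 := Nat.eq_zero_of_dvd_of_lt h9 (by omega)
    omega
  have hFinj : Function.Injective F := by
    rintro ⟨j1, z1⟩ ⟨j2, z2⟩ hF
    have hEq : (u : ZMod e) ^ (j1.val) * (b : ZMod e) + (z1 : ZMod e)
        = (u : ZMod e) ^ (j2.val) * (b : ZMod e) + (z2 : ZMod e) := congrArg Subtype.val hF
    have hψeq : ((t ^ (j1.val) * b - t ^ (j2.val) * b : ℤ) : ZMod g) = 0 := by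
      have h11 := congrArg ψ hEq
      rw [map_add, map_add, hψub, hψub, (hκmem _).mp z1.2, (hκmem _).mp z2.2,
        add_zero, add_zero] at h11
      push_cast
      rw [sub_eq_zero]
      exact_mod_cast h11
    have hdvd := (ZMod.intCast_zmod_eq_zero_iff_dvd _ _).mp hψeq
    have hjj : j1.val = j2.val := by
      rcases le_total j2.val j1.val with hle | hle
      · exact haux _ _ hle (ZMod.val_lt j1) hdvd
      · refine (haux _ _ hle (ZMod.val_lt j2) ?_).symm
        have h12 := dvd_neg.mpr hdvd
        rwa [neg_sub] at h12
    have hj : j1 = j2 := ZMod.val_injective k hjj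
    have hz12 : z1 = z2 := by
      apply Subtype.ext
      have := hEq
      rw [hjj] at this
      exact add_left_cancel this
    rw [Prod.ext_iff]; exact ⟨hj, hz12⟩
  have hFsurj : Function.Surjective F := by
    rintro ⟨y, s, z, hz, hy⟩
    have hmemκ : ψ (z + ((u : ZMod e) ^ s - (u : ZMod e) ^ (s % k)) * (b : ZMod e)) = 0 := by
      have hdv : (g : ℤ) ∣ (t ^ s - t ^ (s % k)) * b := by
        set r := s % k with hrdef
        set q := s / k with hqdef
        have h8 : r + k * q = s := Nat.mod_add_div s k
        have heq : (t ^ s - t ^ r) * b = t ^ r * (b * (t ^ (k * q) - 1)) := by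
          rw [← h8, pow_add]; ring
        rw [heq]
        exact Dvd.dvd.mul_left ((hL _).mpr ⟨q, rfl⟩) _
      have h13 : ψ (((u : ZMod e) ^ s - (u : ZMod e) ^ (s % k)) * (b : ZMod e))
          = (((t ^ s - t ^ (s % k)) * b : ℤ) : ZMod g) := by
        rw [map_mul, map_sub, map_pow, map_pow, hψv, map_intCast]
        push_cast
        ring
      rw [map_add, hz, zero_add, h13]
      exact (ZMod.intCast_zmod_eq_zero_iff_dvd _ _).mpr hdv
    refine ⟨⟨((s % k : ℕ) : ZMod k),
      ⟨z + ((u : ZMod e) ^ s - (u : ZMod e) ^ (s % k)) * (b : ZMod e), (hκmem _).mpr hmemκ⟩⟩, ?_⟩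
    apply Subtype.ext
    show (u : ZMod e) ^ (((s % k : ℕ) : ZMod k)).val * (b : ZMod e)
        + (z + ((u : ZMod e) ^ s - (u : ZMod e) ^ (s % k)) * (b : ZMod e)) = y
    rw [ZMod.val_natCast_of_lt (Nat.mod_lt s hk.1.1), hy]
    ring
  have hTcard : Nat.card T = k * Nat.card κ := by
    rw [← Nat.card_congr (Equiv.ofBijective F ⟨hFinj, hFsurj⟩), Nat.card_prod, Nat.card_zmod]
  rw [hTcard]
  have hκcard : Nat.card κ = e / g :=
    (Nat.div_eq_of_eq_mul_left hgpos (hq1.trans (mul_comm _ _))).symm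

  rw [hκcard, ← Nat.mul_div_assoc k hgdvd]
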